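/- The sequence (5 F_{n^2})_{n≥1}, where F is the Fibonacci sequence (F_1 = F_2 = 1), is realizable: for all n ≥ 1, n divides ∑_{d|n} μ(n/d)·5·F_{d^2} and ∑_{d|n} μ(n/d)·5·F_{d^2} ≥ 0. -/

import Mathlib

/-- A sequence `a : ℕ → ℕ` (indexed from 1) is realizable if there is a set `X`
and a map `T : X → X` such that for every `n ≥ 1` the set of points fixed by the
`n`-th iterate of `T` is finite with cardinality `a n`. -/
def IsRealizable (a : ℕ → ℕ) : Prop :=
  ∃ (X : Type) (T : X → X), ∀ n : ℕ, 1 ≤ n →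
    {x : X | T^[n] x = x}.Finite ∧ {x : X | T^[n] x = x}.ncard = a n

/-- The Möbius-transformed sum `∑_{d ∣ n} μ(n/d) a_d`. -/
def doldSum (a : ℕ → ℕ) (n : ℕ) : ℤ :=
  ∑ d ∈ n.divisors, (ArithmeticFunction.moebius (n / d) : ℤ) * (a d : ℤ)

namespace PartA
open Matrix

abbrev M2 := Matrix (Fin 2) (Fin 2) ℤ

def Q : M2 := !![1, 1; 1, 0]

lemma Q_pow (N : ℕ) :
    Q ^ N = !![(Nat.fib (N+1) : ℤ), Nat.fib N; Nat.fib N, (Nat.fib (N+1) : ℤ) - Nat.fib N] := by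
  induction N with
  | zero => simp [Matrix.one_fin_two]
  | succ N ih =>
    rw [pow_succ, ih]
    rw [Q, Matrix.mul_fin_two]
    have h := Nat.fib_add_two (n := N)
    ext i j
    fin_cases i <;> fin_cases j <;> simp [h] <;> push_cast <;> ring

/-- Congruence of matrices mod c -/
def ModM (c : ℤ) (A B : M2) : Prop := ∃ C : M2, A = B + c • C

lemma ModM.mul_one {c : ℤ} {A B : M2} (hA : ModM c A 1) (hB : ModM c B 1) :
    ModM c (A * B) 1 := by
  obtain ⟨C₁, rfl⟩ := hA
  obtain ⟨C₂, rfl⟩ := hB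
  refine ⟨C₁ + C₂ + c • (C₁ * C₂), ?_⟩
  simp only [add_mul, mul_add, one_mul, mul_one, smul_add, smul_smul,
    smul_mul_assoc, mul_smul_comm]
  rw [_root_.mul_one]
  abel

lemma ModM.pow_one {c : ℤ} {A : M2} (hA : ModM c A 1) (t : ℕ) : ModM c (A ^ t) 1 := by
  induction t with
  | zero => exact ⟨0, by simp⟩
  | succ t ih => rw [pow_succ]; exact ih.mul_one hA

end PartA

namespace PartA2
open PartA Finset

lemma coeff_dvd (p j i : ℕ) (hj : 1 ≤ j) :
    ((p:ℤ))^(j+1) ∣ ((p:ℤ)^j)^(i+1) * (p.choose (i+1) : ℤ) := by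
  rcases i with _ | i
  · simp [Nat.choose_one_right, pow_succ]
  · refine Dvd.dvd.mul_right ?_ _
    rw [← pow_mul]
    exact pow_dvd_pow _ (by nlinarith)

lemma ModM.lift {p j : ℕ} (hj : 1 ≤ j) {A : M2} (h : ModM ((p:ℤ)^j) A 1) :
    ModM ((p:ℤ)^(j+1)) (A ^ p) 1 := by
  obtain ⟨B, rfl⟩ := h
  set d : ℤ := (p:ℤ)^j with hd
  have comm : Commute (d • B) (1 : M2) := Commute.one_right _
  have expand := comm.add_pow p
  rw [add_comm (1 : M2) (d • B), expand]
  rw [Finset.sum_range_succ']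
  simp only [pow_zero, one_mul, Nat.choose_zero_right, Nat.cast_one, mul_one, one_pow]
  have hterm : ∀ i ∈ Finset.range p,
      (d • B) ^ (i+1) * (p.choose (i+1) : M2) =
      ((p:ℤ))^(j+1) • ((d^(i+1) * (p.choose (i+1) : ℤ) / (p:ℤ)^(j+1)) • B^(i+1)) := by
    intro i _
    have hq : ((p:ℤ))^(j+1) * ((d^(i+1) * (p.choose (i+1) : ℤ)) / (p:ℤ)^(j+1)) =
        d^(i+1) * (p.choose (i+1) : ℤ) := Int.mul_ediv_cancel' (coeff_dvd p j i hj)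
    have hc : (p.choose (i+1) : M2) = ((p.choose (i+1) : ℤ)) • (1 : M2) := by simp
    rw [smul_pow, hc, mul_smul_comm, _root_.mul_one, smul_smul, smul_smul, hq, mul_comm ((p.choose (i+1) : ℤ))]
  rw [Finset.sum_congr rfl hterm, ← Finset.smul_sum]
  exact ⟨_, by rw [add_comm]⟩

lemma ModM.liftk {p : ℕ} {A : M2} (h : ModM (p:ℤ) A 1) (k : ℕ) :
    ModM ((p:ℤ)^(k+1)) (A ^ (p^k)) 1 := by
  induction k with
  | zero => simpa using h
  | succ k ih =>
    have := ModM.lift (Nat.succ_le_succ (Nat.zero_le k)) ih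
    rwa [← pow_mul, ← pow_succ] at this

end PartA2

namespace PartA3
open PartA PartA2

lemma modM_of_dvd {c : ℤ} {A : M2} (h : ∀ i j, c ∣ A i j - (1 : M2) i j) : ModM c A 1 := by
  refine ⟨Matrix.of fun i j => (A i j - (1 : M2) i j) / c, ?_⟩
  ext i j
  simp only [Matrix.add_apply, Matrix.smul_apply, Matrix.of_apply, smul_eq_mul]
  rw [Int.mul_ediv_cancel' (h i j)]
  ring

lemma fib_congr {c : ℤ} {e : ℕ} (h : ModM c (Q ^ e) 1) {N N' : ℕ} (hle : N' ≤ N)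
    (hdvd : e ∣ N - N') : c ∣ (Nat.fib N : ℤ) - (Nat.fib N' : ℤ) := by
  obtain ⟨t, ht⟩ := hdvd
  have hN : N = N' + e * t := by omega
  obtain ⟨C, hC⟩ := h.pow_one t
  have hQ : Q ^ N = Q ^ N' + c • (Q ^ N' * C) := by
    rw [hN, pow_add, pow_mul, hC, mul_add, mul_one, mul_smul_comm]
  have hd : c ∣ (Q ^ N - Q ^ N') 0 1 := ⟨(Q ^ N' * C) 0 1, by rw [hQ]; simp only [add_sub_cancel_left, Matrix.smul_apply, smul_eq_mul]⟩
  have he : (Q ^ N - Q ^ N') 0 1 = (Nat.fib N : ℤ) - Nat.fib N' := by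
    rw [Matrix.sub_apply, Q_pow, Q_pow]; simp
  rwa [he] at hd

lemma helper {p e k : ℕ} (hk : 1 ≤ k) (hbase : ModM (p:ℤ) (Q ^ e) 1)
    {N N' : ℕ} (hle : N' ≤ N) (hdvd : e * p^(k-1) ∣ N - N') :
    (p:ℤ)^k ∣ (Nat.fib N : ℤ) - (Nat.fib N' : ℤ) := by
  have h1 := PartA2.ModM.liftk hbase (k-1)
  rw [← pow_mul] at h1
  have hkk : k - 1 + 1 = k := by omega
  rw [hkk] at h1
  exact fib_congr h1 hle hdvd

lemma base2 : ModM (2:ℤ) (Q ^ 3) 1 := by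
  apply modM_of_dvd
  intro i j
  rw [Q_pow]
  have h4 : Nat.fib 4 = 3 := by decide
  have h3 : Nat.fib 3 = 2 := by decide
  fin_cases i <;> fin_cases j <;> simp [h4, h3] <;> decide

lemma base5 : ModM (5:ℤ) (Q ^ 20) 1 := by
  apply modM_of_dvd
  intro i j
  rw [Q_pow]
  have h21 : Nat.fib 21 = 10946 := by decide
  have h20 : Nat.fib 20 = 6765 := by decide
  fin_cases i <;> fin_cases j <;> simp [h21, h20] <;> decide

lemma basep {p : ℕ} (hp : 2 ≤ p)
    (hfib1 : (p:ℤ) ∣ (Nat.fib (p^2) : ℤ) - 1) (hfib0 : (p:ℤ) ∣ (Nat.fib (p^2 - 1) : ℤ)) :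
    ModM (p:ℤ) (Q ^ (p^2 - 1)) 1 := by
  apply modM_of_dvd
  intro i j
  rw [Q_pow]
  have hpp : p^2 - 1 + 1 = p^2 := by nlinarith [Nat.sub_add_cancel (show 1 ≤ p^2 by nlinarith)]
  rw [hpp]
  fin_cases i <;> fin_cases j <;> simp
  · exact hfib1
  · exact hfib0
  · exact hfib0
  · have := dvd_sub hfib1 hfib0
    rwa [show (Nat.fib (p^2):ℤ) - Nat.fib (p^2-1) - 1 = (Nat.fib (p^2):ℤ) - 1 - Nat.fib (p^2-1) by ring]

end PartA3

namespace PartG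

theorem fib_pq {p : ℕ} [hfp : Fact p.Prime] (hp2 : p ≠ 2) (hp5 : p ≠ 5) :
    ((p:ℤ) ∣ (Nat.fib (p^2) : ℤ) - 1) ∧ ((p:ℤ) ∣ (Nat.fib (p^2 - 1) : ℤ)) := by
  classical
  set K := GaloisField p 2 with hK
  letI : Fintype K := Fintype.ofFinite K
  have hcard : Fintype.card K = p^2 := by
    rw [← Nat.card_eq_fintype_card]; exact GaloisField.card p 2 two_ne_zero
  have hprime := hfp.out
  have hcast : ∀ m : ℕ, ((m:K) = 0 ↔ p ∣ m) := fun m => CharP.cast_eq_zero_iff K p m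
  have h5 : (5:K) ≠ 0 := by
    intro h
    have h' : ((5:ℕ) : K) = 0 := by exact_mod_cast h
    exact hp5 ((Nat.prime_dvd_prime_iff_eq hprime (by norm_num)).mp ((hcast 5).mp h'))
  have h2 : (2:K) ≠ 0 := by
    intro h
    have h' : ((2:ℕ) : K) = 0 := by exact_mod_cast h
    exact hp2 ((Nat.prime_dvd_prime_iff_eq hprime (by norm_num)).mp ((hcast 2).mp h'))
  have hchar : ringChar K ≠ 2 := by
    rw [ringChar.eq K p]; exact hp2
  -- p is odd
  obtain ⟨t, ht⟩ : ∃ t, p = 2 * t + 1 := by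
    have := hprime.eq_one_or_self_of_dvd 2
    rcases Nat.even_or_odd p with he | ho
    · exfalso; exact hp2 ((hprime.even_iff).mp he)
    · exact ho
  -- 5 ^ (p-1) = 1 in K
  have h5p : (5:K) ^ (p - 1) = 1 := by
    have h5z : (5 : ZMod p) ≠ 0 := by
      intro h
      exact hp5 ((Nat.prime_dvd_prime_iff_eq hprime (by norm_num)).mp
        ((CharP.cast_eq_zero_iff (ZMod p) p 5).mp (by exact_mod_cast h)))
    have hzmod : (5 : ZMod p) ^ (p - 1) = 1 := ZMod.pow_card_sub_one_eq_one h5z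
    have hmap : (5:K) = algebraMap (ZMod p) K (5 : ZMod p) := by
      rw [map_ofNat]
    rw [hmap, ← map_pow, hzmod, map_one]
  -- 5 is a square in K
  have hsq : IsSquare (5:K) := by
    rw [FiniteField.isSquare_iff hchar h5, hcard]
    have hsq' : (2*t+1)^2 = 4*t^2+4*t+1 := by ring
    have hL : (2*t+1)^2 / 2 = 2*t^2 + 2*t := by omega
    have hR : ((2*t+1) - 1) * (((2*t+1)+1)/2) = 2*t^2 + 2*t := by
      have e1 : ((2*t+1)+1)/2 = t+1 := by omega
      have e2 : (2*t+1)-1 = 2*t := by omega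
      rw [e1, e2]; ring
    have hexp : p ^ 2 / 2 = (p - 1) * ((p + 1) / 2) := by
      subst ht; rw [hL, hR]
    rw [hexp, pow_mul, h5p, one_pow]
  obtain ⟨s, hs⟩ := hsq
  have hs0 : s ≠ 0 := by
    intro h; rw [h, mul_zero] at hs; exact h5 hs
  set α : K := (1 + s) / 2 with hα
  set β : K := (1 - s) / 2 with hβ
  have hαβ : α - β = s := by
    rw [hα, hβ, div_sub_div_same, div_eq_iff h2]; ring
  have hα2 : α ^ 2 = α + 1 := by
    rw [hα, div_pow, div_add_one h2, div_eq_div_iff (pow_ne_zero 2 h2) h2]; linear_combination (-2:K) * hs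
  have hβ2 : β ^ 2 = β + 1 := by
    rw [hβ, div_pow, div_add_one h2, div_eq_div_iff (pow_ne_zero 2 h2) h2]; linear_combination (-2:K) * hs
  have hαβm : α * β = -1 := by
    rw [hα, hβ, div_mul_div_comm, div_eq_iff (mul_ne_zero h2 h2)]; linear_combination hs
  have hα0 : α ≠ 0 := by
    intro h; rw [h, zero_mul] at hαβm; exact (by norm_num : (0:K) ≠ -1) hαβm
  have hβ0 : β ≠ 0 := by
    intro h; rw [h, mul_zero] at hαβm; exact (by norm_num : (0:K) ≠ -1) hαβm
  -- fib formula
  have formula : ∀ n : ℕ, (Nat.fib n : K) * s = α ^ n - β ^ n := by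
    intro n
    induction n using Nat.twoStepInduction with
    | zero => simp
    | one => simpa using hαβ.symm
    | more n ih1 ih2 =>
      rw [Nat.fib_add_two]
      push_cast
      linear_combination ih1 + ih2 - (α ^ n) * hα2 + (β ^ n) * hβ2
  have hαp : α ^ (p ^ 2) = α := by rw [← hcard]; exact FiniteField.pow_card α
  have hβp : β ^ (p ^ 2) = β := by rw [← hcard]; exact FiniteField.pow_card β
  have hp2pos : 1 ≤ p ^ 2 := Nat.one_le_pow _ _ hprime.pos
  have hα1 : α ^ (p ^ 2 - 1) = 1 := by
    have : α ^ (p ^ 2 - 1) * α = 1 * α := by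
      rw [← pow_succ, Nat.sub_add_cancel hp2pos, hαp, one_mul]
    exact mul_right_cancel₀ hα0 this
  have hβ1 : β ^ (p ^ 2 - 1) = 1 := by
    have : β ^ (p ^ 2 - 1) * β = 1 * β := by
      rw [← pow_succ, Nat.sub_add_cancel hp2pos, hβp, one_mul]
    exact mul_right_cancel₀ hβ0 this
  have hfib1K : (Nat.fib (p ^ 2) : K) = 1 := by
    have h1 := formula (p ^ 2)
    rw [hαp, hβp, hαβ] at h1
    have : (Nat.fib (p ^ 2) : K) * s = 1 * s := by rw [h1, one_mul]
    exact mul_right_cancel₀ hs0 this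
  have hfib0K : (Nat.fib (p ^ 2 - 1) : K) = 0 := by
    have h1 := formula (p ^ 2 - 1)
    rw [hα1, hβ1, sub_self] at h1
    rcases mul_eq_zero.mp h1 with h | h
    · exact h
    · exact absurd h hs0
  constructor
  · have : (((Nat.fib (p ^ 2) : ℤ) - 1 : ℤ) : K) = 0 := by
      push_cast
      rw [hfib1K]; ring
    exact (CharP.intCast_eq_zero_iff K p _).mp this
  · have : (((Nat.fib (p ^ 2 - 1) : ℤ)) : K) = 0 := by
      push_cast
      rw [hfib0K]
    exact (CharP.intCast_eq_zero_iff K p _).mp this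

end PartG

namespace PartB
open PartA PartA3

abbrev aa : ℕ → ℕ := fun m => 5 * Nat.fib (m ^ 2)

lemma gauss (p : ℕ) (hp : p.Prime) (k : ℕ) (hk : 1 ≤ k) (m : ℕ) :
    (p:ℤ)^k ∣ ((aa (p^k * m) : ℤ) - (aa (p^(k-1) * m) : ℤ)) := by
  obtain ⟨k0, rfl⟩ : ∃ k0, k = k0 + 1 := ⟨k - 1, by omega⟩
  have hk1 : k0 + 1 - 1 = k0 := by omega
  rw [hk1]
  set N' : ℕ := (p^k0 * m)^2 with hN'
  set N : ℕ := (p^(k0+1) * m)^2 with hN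
  have hNN : N = p^2 * N' := by rw [hN, hN']; ring
  have hle : N' ≤ N := by
    rw [hNN]; exact Nat.le_mul_of_pos_left _ (pow_pos hp.pos 2)
  have hdiff : N - N' = (p^2 - 1) * N' := by
    have h1 : 1 ≤ p^2 := Nat.one_le_pow _ _ hp.pos
    rw [hNN, Nat.sub_mul, one_mul]
  have hval : N' = p^(2*k0) * m^2 := by rw [hN']; ring
  have hfib : ∀ c : ℤ, c ∣ (Nat.fib N : ℤ) - (Nat.fib N' : ℤ) →
      c * 5 ∣ (aa (p^(k0+1) * m) : ℤ) - (aa (p^k0 * m) : ℤ) := by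
    intro c hc
    obtain ⟨u, hu⟩ := hc
    refine ⟨u, ?_⟩
    show ((5 * Nat.fib N : ℕ) : ℤ) - ((5 * Nat.fib N' : ℕ) : ℤ) = c * 5 * u
    push_cast
    linarith [hu]
  have hfib' : ∀ c : ℤ, c ∣ (Nat.fib N : ℤ) - (Nat.fib N' : ℤ) →
      c ∣ (aa (p^(k0+1) * m) : ℤ) - (aa (p^k0 * m) : ℤ) := by
    intro c hc
    have := hfib c hc
    exact dvd_trans (Dvd.intro 5 rfl) this
  by_cases hp2 : p = 2
  · subst hp2
    refine hfib' _ (helper (Nat.le_add_left 1 k0) base2 hle ?_)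
    rw [hdiff, hk1, hval]
    show 3 * 2^k0 ∣ (2^2 - 1) * (2^(2*k0) * m^2)
    have h3 : (2:ℕ)^2 - 1 = 3 := by norm_num
    rw [h3]
    refine mul_dvd_mul_left 3 (dvd_mul_of_dvd_left (pow_dvd_pow 2 (by omega)) _)
  by_cases hp5 : p = 5
  · subst hp5
    rcases Nat.eq_zero_or_pos k0 with hk0 | hk0
    · subst hk0
      refine ⟨(Nat.fib N : ℤ) - Nat.fib N', ?_⟩
      show ((5 * Nat.fib N : ℕ) : ℤ) - ((5 * Nat.fib N' : ℕ) : ℤ) = _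
      push_cast
      ring
    · obtain ⟨k1, rfl⟩ : ∃ k1, k0 = k1 + 1 := ⟨k0 - 1, by omega⟩
      have hc : (5:ℤ)^(k1+1) ∣ (Nat.fib N : ℤ) - (Nat.fib N' : ℤ) := by
        refine helper (by omega) base5 hle ?_
        rw [hdiff, hval]
        have e1 : k1 + 1 - 1 = k1 := by omega
        rw [e1]
        refine ⟨30 * 5^k1 * m^2, ?_⟩
        show (5^2 - 1) * (5 ^ (2 * (k1+1)) * m ^ 2) = _
        have e2 : (5:ℕ)^2 - 1 = 24 := by norm_num
        rw [e2]
        ring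
      have := hfib _ hc
      have e3 : (5:ℤ)^(k1+1) * 5 = 5^(k1+1+1) := by ring
      rwa [e3] at this
  · haveI := Fact.mk hp
    obtain ⟨h1, h0⟩ := PartG.fib_pq hp2 hp5
    refine hfib' _ (helper (Nat.le_add_left 1 k0) (basep hp.two_le h1 h0) hle ?_)
    rw [hdiff, hk1, hval]
    exact mul_dvd_mul_left _ (dvd_mul_of_dvd_left (pow_dvd_pow p (by omega)) _)

end PartB

namespace PartC
open ArithmeticFunction Finset PartB


lemma prime_pow_dvd_dold (p : ℕ) (hp : p.Prime) (k m : ℕ) (hk : 1 ≤ k)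
    (hpm : ¬ p ∣ m) (hm : m ≠ 0) :
    (p:ℤ)^k ∣ doldSum aa (p^k * m) := by
  obtain ⟨k0, rfl⟩ : ∃ k0, k = k0 + 1 := ⟨k - 1, by omega⟩
  set n := p^(k0+1) * m with hn
  have hppos : 0 < p := hp.pos
  have hn0 : n ≠ 0 := Nat.mul_ne_zero (pow_ne_zero _ hppos.ne') hm
  set S1 := m.divisors.image (fun e => p^(k0+1) * e) with hS1
  set S2 := m.divisors.image (fun e => p^k0 * e) with hS2
  have hsub : S1 ∪ S2 ⊆ n.divisors := by
    intro d hd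
    rcases Finset.mem_union.mp hd with h | h <;>
      obtain ⟨e, he, rfl⟩ := Finset.mem_image.mp h <;>
      exact Nat.mem_divisors.mpr
        ⟨mul_dvd_mul (pow_dvd_pow p (by omega)) (Nat.mem_divisors.mp he).1, hn0⟩
  have hdisj : Disjoint S1 S2 := by
    rw [Finset.disjoint_left]
    rintro d hd1 hd2
    obtain ⟨e, he, heq⟩ := Finset.mem_image.mp hd1
    obtain ⟨e', he', heq'⟩ := Finset.mem_image.mp hd2
    have : p^k0 * (p * e) = p^k0 * e' := by
      rw [show p^k0 * (p * e) = p^(k0+1) * e from by ring, heq]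
      exact heq'.symm
    have hpe : p * e = e' := Nat.eq_of_mul_eq_mul_left (pow_pos hppos k0) this
    exact hpm (dvd_trans (Dvd.intro e rfl) (hpe ▸ (Nat.mem_divisors.mp he').1))
  have hinj1 : ∀ x ∈ m.divisors, ∀ y ∈ m.divisors,
      p^(k0+1) * x = p^(k0+1) * y → x = y :=
    fun x _ y _ h => Nat.eq_of_mul_eq_mul_left (pow_pos hppos _) h
  have hinj2 : ∀ x ∈ m.divisors, ∀ y ∈ m.divisors,
      p^k0 * x = p^k0 * y → x = y :=
    fun x _ y _ h => Nat.eq_of_mul_eq_mul_left (pow_pos hppos _) h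
  have hzero : ∀ d ∈ n.divisors, d ∉ S1 ∪ S2 →
      (ArithmeticFunction.moebius (n / d) : ℤ) * (aa d : ℤ) = 0 := by
    intro d hd hnot
    have hdn : d ∣ n := (Nat.mem_divisors.mp hd).1
    have hd0 : d ≠ 0 := fun h => hn0 (Nat.eq_zero_of_zero_dvd (h ▸ hdn))
    set j := d.factorization p with hj
    set e := d / p^j with he
    have hde : d = p^j * e := (Nat.ordProj_mul_ordCompl_eq_self d p).symm
    have hpe : ¬ p ∣ e := Nat.not_dvd_ordCompl hp hd0
    have hcop : Nat.Coprime e (p^(k0+1)) :=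
      ((hp.coprime_iff_not_dvd.mpr hpe).symm).pow_right _
    have hem : e ∣ m := by
      have h1 : e ∣ n := dvd_trans (Dvd.intro_left _ hde.symm) hdn
      rw [hn, mul_comm] at h1
      exact (Nat.Coprime.dvd_of_dvd_mul_right hcop h1)
    have hjk : j ≤ k0 + 1 := by
      have h1 : p^j ∣ n := dvd_trans (Dvd.intro _ hde.symm) hdn
      have h2 : p^j ∣ p^(k0+1) := by
        rw [hn] at h1
        have hcop2 : Nat.Coprime (p^j) m := Nat.Coprime.pow_left j (hp.coprime_iff_not_dvd.mpr hpm)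
        exact hcop2.dvd_of_dvd_mul_right h1
      exact (Nat.pow_dvd_pow_iff_le_right hp.one_lt).mp h2
    have hem' : e ∈ m.divisors := Nat.mem_divisors.mpr ⟨hem, hm⟩
    -- j cannot be k0+1 or k0
    have hj1 : j ≠ k0 + 1 := by
      intro h
      exact (Finset.notMem_union.mp hnot).1
        (Finset.mem_image.mpr ⟨e, hem', by rw [← h, ← hde]⟩)
    have hj2 : j ≠ k0 := by
      intro h
      exact (Finset.notMem_union.mp hnot).2
        (Finset.mem_image.mpr ⟨e, hem', by rw [← h, ← hde]⟩)
    have hjlt : j + 2 ≤ k0 + 1 := by omega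
    -- p^2 divides n / d
    have hnd : n / d = p^(k0+1-j) * (m / e) := by
      have hdpos : 0 < d := Nat.pos_of_ne_zero hd0
      refine Nat.div_eq_of_eq_mul_left hdpos ?_
      rw [hn, hde]
      have h1 : m = e * (m / e) := (Nat.mul_div_cancel' hem).symm
      have h2 : p^(k0+1-j) * p^j = p^(k0+1) := by
        rw [← pow_add]
        congr 1
        omega
      calc p^(k0+1) * m = p^(k0+1) * (e * (m/e)) := by rw [← h1]
        _ = (p^(k0+1-j) * (m/e)) * (p^j * e) := by rw [← h2]; ring
    have hsq : ¬ Squarefree (n / d) := by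
      intro hsq
      have hdvd : p * p ∣ n / d := by
        rw [hnd]
        refine dvd_mul_of_dvd_left ?_ _
        have : p * p = p^2 := by ring
        rw [this]
        exact pow_dvd_pow p (by omega)
      exact hp.one_lt.ne' (Nat.isUnit_iff.mp (hsq p hdvd))
    rw [moebius_eq_zero_of_not_squarefree hsq]
    simp
  have hstep : doldSum aa n = ∑ d ∈ S1 ∪ S2,
      (ArithmeticFunction.moebius (n / d) : ℤ) * (aa d : ℤ) := by
    exact (Finset.sum_subset hsub hzero).symm
  rw [hstep, Finset.sum_union hdisj, Finset.sum_image hinj1, Finset.sum_image hinj2]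
  have hmu1 : ∀ e ∈ m.divisors,
      (ArithmeticFunction.moebius (n / (p^(k0+1) * e)) : ℤ) = moebius (m / e) := by
    intro e he
    congr 1
    rw [hn, Nat.mul_div_mul_left _ _ (pow_pos hppos _)]
  have hmu2 : ∀ e ∈ m.divisors,
      (ArithmeticFunction.moebius (n / (p^k0 * e)) : ℤ) = -moebius (m / e) := by
    intro e he
    have hem := (Nat.mem_divisors.mp he).1
    have h1 : n / (p^k0 * e) = p * (m / e) := by
      rw [hn]
      have : p^(k0+1) * m = p^k0 * (p * m) := by ring
      rw [this, Nat.mul_div_mul_left _ _ (pow_pos hppos _),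
        Nat.mul_div_assoc p hem]
    rw [h1]
    have hptm : ¬ p ∣ (m / e) := fun h => hpm (dvd_trans h (Nat.div_dvd_of_dvd hem))
    have hcop : Nat.Coprime p (m / e) := hp.coprime_iff_not_dvd.mpr hptm
    rw [isMultiplicative_moebius.map_mul_of_coprime hcop, moebius_apply_prime hp]
    push_cast
    ring
  have hrw1 : (∑ e ∈ m.divisors, (moebius (n / (p^(k0+1) * e)) : ℤ) * (aa (p^(k0+1) * e) : ℤ))
      = ∑ e ∈ m.divisors, (moebius (m / e) : ℤ) * (aa (p^(k0+1) * e) : ℤ) :=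
    Finset.sum_congr rfl fun e he => by rw [hmu1 e he]
  have hrw2 : (∑ e ∈ m.divisors, (moebius (n / (p^k0 * e)) : ℤ) * (aa (p^k0 * e) : ℤ))
      = ∑ e ∈ m.divisors, (-(moebius (m / e) : ℤ)) * (aa (p^k0 * e) : ℤ) :=
    Finset.sum_congr rfl fun e he => by rw [hmu2 e he]
  rw [hrw1, hrw2, ← Finset.sum_add_distrib]
  refine Finset.dvd_sum fun e he => ?_
  have hg := PartB.gauss p hp (k0+1) (by omega) e
  have he1 : k0 + 1 - 1 = k0 := by omega
  rw [he1] at hg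
  have hterm : (moebius (m / e) : ℤ) * (aa (p^(k0+1) * e) : ℤ) +
      (-(moebius (m / e) : ℤ)) * (aa (p^k0 * e) : ℤ)
      = (moebius (m / e) : ℤ) * ((aa (p^(k0+1) * e) : ℤ) - (aa (p^k0 * e) : ℤ)) := by ring
  rw [hterm]
  exact hg.mul_left _

end PartC

namespace PartD
open ArithmeticFunction Finset PartB


lemma dold_dvd (n : ℕ) (hn : 1 ≤ n) : (n:ℤ) ∣ doldSum aa n := by
  have hn0 : n ≠ 0 := by omega
  have hfact' : ∏ p ∈ n.primeFactors, p ^ n.factorization p = n :=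
    Nat.factorization_prod_pow_eq_self hn0
  have hcast : (n:ℤ) = ∏ p ∈ n.primeFactors, (p:ℤ) ^ (n.factorization p) := by
    conv_lhs => rw [← hfact']
    push_cast
    rfl
  rw [hcast]
  refine Finset.prod_dvd_of_coprime ?_ ?_
  · intro p hp q hq hne
    simp only [Function.onFun]
    have hpp := Nat.prime_of_mem_primeFactors hp
    have hqq := Nat.prime_of_mem_primeFactors hq
    exact (Nat.isCoprime_iff_coprime.mpr ((Nat.coprime_primes hpp hqq).mpr hne)).pow
  · intro p hp
    have hpp := Nat.prime_of_mem_primeFactors hp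
    have hdvd := Nat.dvd_of_mem_primeFactors hp
    have hk : 1 ≤ n.factorization p := hpp.factorization_pos_of_dvd hn0 hdvd
    have hrw : n = p ^ n.factorization p * (n / p ^ n.factorization p) :=
      (Nat.ordProj_mul_ordCompl_eq_self n p).symm
    have h := PartC.prime_pow_dvd_dold p hpp (n.factorization p) (n / p ^ n.factorization p)
      hk (Nat.not_dvd_ordCompl hpp hn0) (Nat.ordCompl_pos p hn0).ne'
    rwa [← hrw] at h

-- Part D : nonnegativity
lemma fib_pow_le (m t : ℕ) : Nat.fib m * 2 ^ t ≤ Nat.fib (m + 2 * t) := by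
  induction t with
  | zero => simp
  | succ t ih =>
    have h1 : m + 2 * (t + 1) = (m + 2 * t) + 2 := by ring
    rw [h1, Nat.fib_add_two, pow_succ]
    have h2 : Nat.fib (m + 2 * t) ≤ Nat.fib (m + 2 * t + 1) := Nat.fib_mono (by omega)
    calc Nat.fib m * (2 ^ t * 2) = (Nat.fib m * 2 ^ t) * 2 := by ring
      _ ≤ Nat.fib (m + 2 * t) * 2 := by exact Nat.mul_le_mul_right 2 ih
      _ ≤ Nat.fib (m + 2 * t) + Nat.fib (m + 2 * t + 1) := by omega

lemma moebius_ge_neg_one (x : ℕ) : (-1 : ℤ) ≤ moebius x := by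
  by_cases hsq : Squarefree x
  · rw [moebius_apply_of_squarefree hsq]
    rcases Nat.even_or_odd (cardFactors x) with h | h
    · rw [h.neg_one_pow]; omega
    · rw [h.neg_one_pow]
  · rw [moebius_eq_zero_of_not_squarefree hsq]; omega

lemma divisor_le_half {n d : ℕ} (hn : n ≠ 0) (hd : d ∣ n) (hne : d ≠ n) : 2 * d ≤ n := by
  obtain ⟨c, rfl⟩ := hd
  have hc0 : c ≠ 0 := by rintro rfl; simp at hn
  have hc1 : c ≠ 1 := by rintro rfl; simp at hne
  have : 2 ≤ c := by omega
  nlinarith [Nat.pos_of_ne_zero hc0]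

lemma key_ineq (n : ℕ) (hn : 2 ≤ n) : n * Nat.fib ((n / 2) ^ 2) ≤ Nat.fib (n ^ 2) := by
  obtain ⟨k, rfl⟩ : ∃ k, n = k + 2 := ⟨n - 2, by omega⟩
  set n := k + 2 with hnn
  set q := n / 2 with hq
  set t := (n ^ 2 - q ^ 2) / 2 with ht
  have h2q : 2 * q ≤ n := by omega
  have hsq : 4 * (q * q) ≤ n * n := by nlinarith
  have hquad : 8 * (k + 1) ≤ 3 * (n * n) := by nlinarith
  have hpow : n ^ 2 = n * n := by ring
  have hqow : q ^ 2 = q * q := by ring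
  have htge : k + 1 ≤ t := by
    rw [ht, hpow, hqow]; omega
  have hn2 : n ≤ 2 ^ t := by
    calc n = (k + 1) + 1 := by omega
      _ ≤ 2 ^ (k + 1) := Nat.lt_two_pow_self
      _ ≤ 2 ^ t := Nat.pow_le_pow_right (by omega) htge
  have hle : q ^ 2 + 2 * t ≤ n ^ 2 := by
    rw [ht, hpow, hqow]; omega
  calc n * Nat.fib (q ^ 2) ≤ 2 ^ t * Nat.fib (q ^ 2) := Nat.mul_le_mul_right _ hn2
    _ = Nat.fib (q ^ 2) * 2 ^ t := by ring
    _ ≤ Nat.fib (q ^ 2 + 2 * t) := fib_pow_le _ _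
    _ ≤ Nat.fib (n ^ 2) := Nat.fib_mono hle

lemma dold_nonneg (n : ℕ) (hn : 1 ≤ n) : 0 ≤ doldSum aa n := by
  rcases eq_or_lt_of_le hn with h1 | h2
  · rw [← h1]
    simp [doldSum, Nat.divisors_one]
  · have hn2 : 2 ≤ n := h2
    have hn0 : n ≠ 0 := by omega
    have hmem : n ∈ n.divisors := Nat.mem_divisors_self n hn0
    rw [doldSum, ← Finset.add_sum_erase _ _ hmem]
    have hμn : (ArithmeticFunction.moebius (n / n) : ℤ) = 1 := by
      rw [Nat.div_self (by omega : 0 < n)]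
      exact ArithmeticFunction.moebius_apply_one
    rw [hμn, one_mul]
    set s := n.divisors.erase n with hs
    set B : ℕ := 5 * Nat.fib ((n/2)^2) with hB
    have hbound : ∀ d ∈ s, -((aa d : ℤ)) ≤ (ArithmeticFunction.moebius (n / d) : ℤ) * (aa d : ℤ) := by
      intro d hd
      have h1 := moebius_ge_neg_one (n / d)
      have h2 : (0:ℤ) ≤ (aa d : ℤ) := Int.natCast_nonneg _
      nlinarith
    have hsum1 : -(∑ d ∈ s, ((aa d : ℤ))) ≤ ∑ d ∈ s, (ArithmeticFunction.moebius (n / d) : ℤ) * (aa d : ℤ) := by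
      rw [← Finset.sum_neg_distrib]
      exact Finset.sum_le_sum hbound
    have hterm : ∀ d ∈ s, (aa d : ℤ) ≤ ((B : ℕ) : ℤ) := by
      intro d hd
      obtain ⟨hne, hdd⟩ := Finset.mem_erase.mp hd
      have hdvd := (Nat.mem_divisors.mp hdd).1
      have h2d : 2 * d ≤ n := divisor_le_half hn0 hdvd hne
      have hdq : d ≤ n / 2 := by omega
      have : aa d ≤ B := by
        rw [hB]
        exact Nat.mul_le_mul_left 5 (Nat.fib_mono (Nat.pow_le_pow_left hdq 2))
      exact_mod_cast this
    have hcard : s.card ≤ n := by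
      have hsub : n.divisors ⊆ Finset.Icc 1 n := fun d hd => Finset.mem_Icc.mpr
        ⟨Nat.pos_of_mem_divisors hd, Nat.le_of_dvd (by omega) (Nat.mem_divisors.mp hd).1⟩
      calc s.card ≤ n.divisors.card := Finset.card_le_card (Finset.erase_subset _ _)
        _ ≤ (Finset.Icc 1 n).card := Finset.card_le_card hsub
        _ = n := by rw [Nat.card_Icc]; omega
    have hsum2 : ∑ d ∈ s, ((aa d : ℤ)) ≤ (n : ℤ) * ((B:ℕ) : ℤ) := by
      have h1 := Finset.sum_le_card_nsmul s _ ((B:ℕ) : ℤ) hterm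
      have h2 : (s.card : ℤ) * ((B:ℕ):ℤ) ≤ (n:ℤ) * ((B:ℕ):ℤ) := by
        have : ((B:ℕ):ℤ) ≥ 0 := Int.natCast_nonneg _
        have hc : (s.card : ℤ) ≤ (n : ℤ) := by exact_mod_cast hcard
        nlinarith
      calc ∑ d ∈ s, ((aa d : ℤ)) ≤ s.card • ((B:ℕ):ℤ) := h1
        _ = (s.card : ℤ) * ((B:ℕ):ℤ) := by rw [nsmul_eq_mul]
        _ ≤ _ := h2
    have hfinal : (n : ℤ) * ((B:ℕ) : ℤ) ≤ (aa n : ℤ) := by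
      have hnat : n * B ≤ aa n := by
        rw [hB]
        calc n * (5 * Nat.fib ((n/2)^2)) = 5 * (n * Nat.fib ((n/2)^2)) := by ring
          _ ≤ 5 * Nat.fib (n^2) := Nat.mul_le_mul_left 5 (key_ineq n hn2)
      exact_mod_cast hnat
    linarith

end PartD

namespace PartE

variable (a : ℕ → ℕ)

noncomputable def c (d : ℕ) : ℕ := (doldSum a d).toNat / d

lemma moebius_inversion
    (h : ∀ n : ℕ, 1 ≤ n → (n : ℤ) ∣ doldSum a n ∧ 0 ≤ doldSum a n) :
    ∀ n : ℕ, 1 ≤ n → ∑ d ∈ n.divisors, d * c a d = a n := by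
  have key : ∀ n : ℕ, 0 < n → ((n : ℤ) * (c a n : ℤ) = doldSum a n) := by
    intro n hn
    obtain ⟨hdvd, hpos⟩ := h n hn
    obtain ⟨t, ht⟩ := hdvd
    have hterm : (doldSum a n).toNat = n * c a n := by
      unfold c
      rw [Nat.mul_div_cancel']
      refine (Int.natCast_dvd_natCast).mp ?_
      rw [Int.toNat_of_nonneg hpos]; exact ⟨t, ht⟩
    have := Int.toNat_of_nonneg hpos
    rw [← this, hterm]
    push_cast
    ring
  have inv := (ArithmeticFunction.sum_eq_iff_sum_smul_moebius_eq
    (R := ℤ) (f := fun d => (d : ℤ) * (c a d : ℤ)) (g := fun n => (a n : ℤ))).mpr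
  have hyp : ∀ n : ℕ, n > 0 → ∑ x ∈ n.divisorsAntidiagonal,
      (ArithmeticFunction.moebius x.fst) • ((a x.snd : ℤ)) = (n : ℤ) * (c a n : ℤ) := by
    intro n hn
    rw [key n hn]
    unfold doldSum
    rw [← Nat.sum_divisorsAntidiagonal' (f := fun x y => (ArithmeticFunction.moebius x : ℤ) * (a y : ℤ))]
    simp [zsmul_eq_mul]
  intro n hn
  have := inv hyp n hn
  exact_mod_cast this

def rot {d : ℕ} (j : Fin d) : Fin d := ⟨(j.val + 1) % d, Nat.mod_lt _ j.pos⟩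

lemma rot_iterate {d : ℕ} (n : ℕ) (j : Fin d) : (rot^[n] j).val = (j.val + n) % d := by
  induction n with
  | zero => simp [Nat.mod_eq_of_lt j.isLt]
  | succ n ih =>
    rw [Function.iterate_succ_apply']
    show ((rot^[n] j).val + 1) % d = _
    rw [ih, Nat.mod_add_mod, Nat.add_assoc]

lemma rot_iterate_fixed {d : ℕ} (n : ℕ) (j : Fin d) : rot^[n] j = j ↔ d ∣ n := by
  rw [Fin.ext_iff, rot_iterate]
  constructor
  · intro hmod
    have : j.val ≡ j.val + n [MOD d] := by
      unfold Nat.ModEq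
      rw [hmod, Nat.mod_eq_of_lt j.isLt]
    have := (Nat.modEq_iff_dvd' (Nat.le_add_right _ _)).mp this
    simpa using this
  · rintro ⟨t, rfl⟩
    rw [Nat.add_mul_mod_self_left, Nat.mod_eq_of_lt j.isLt]

variable (c : ℕ → ℕ)

abbrev Space : Type := (d : ℕ) × (Fin (c d) × Fin d)

def T : Space c → Space c := fun x => ⟨x.1, x.2.1, rot x.2.2⟩

lemma T_iterate (n : ℕ) (x : Space c) : (T c)^[n] x = ⟨x.1, x.2.1, rot^[n] x.2.2⟩ := by
  induction n with
  | zero => rfl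
  | succ n ih =>
    rw [Function.iterate_succ_apply', ih, Function.iterate_succ_apply']
    rfl

lemma fixed_set_eq (n : ℕ) (hn : 1 ≤ n) :
    {x : Space c | (T c)^[n] x = x} =
      ↑((n.divisors).sigma (fun d => (Finset.univ : Finset (Fin (c d) × Fin d)))) := by
  ext ⟨d, i, j⟩
  simp only [Set.mem_setOf_eq, T_iterate, Finset.coe_sigma, Set.mem_sigma_iff,
    Finset.mem_coe, Nat.mem_divisors, Finset.mem_univ, and_true]
  constructor
  · intro hx
    have : rot^[n] j = j := by
      have h2 := (Sigma.mk.inj_iff.mp hx).2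
      rw [heq_eq_eq, Prod.mk.injEq] at h2
      exact h2.2
    exact ⟨(rot_iterate_fixed n j).mp this, by omega⟩
  · rintro ⟨hd, -⟩
    have : rot^[n] j = j := (rot_iterate_fixed n j).mpr hd
    simp [this]

lemma realize (a : ℕ → ℕ)
    (hsum : ∀ n : ℕ, 1 ≤ n → ∑ d ∈ n.divisors, d * c d = a n) :
    IsRealizable a := by
  refine ⟨Space c, T c, fun n hn => ?_⟩
  rw [fixed_set_eq c n hn]
  refine ⟨Set.toFinite _, ?_⟩
  rw [Set.ncard_coe_finset, Finset.card_sigma]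
  rw [← hsum n hn]
  refine Finset.sum_congr rfl fun d _ => ?_
  simp [Fintype.card_prod, mul_comm]

end PartE



theorem five_fib_squares_realizable :
    IsRealizable (fun n => 5 * Nat.fib (n ^ 2)) ∧
    ∀ n : ℕ, 1 ≤ n →
      (n : ℤ) ∣ doldSum (fun m => 5 * Nat.fib (m ^ 2)) n ∧
      0 ≤ doldSum (fun m => 5 * Nat.fib (m ^ 2)) n := by
  have hdold : ∀ n : ℕ, 1 ≤ n → (n:ℤ) ∣ doldSum PartB.aa n ∧ 0 ≤ doldSum PartB.aa n :=
    fun n hn => ⟨PartD.dold_dvd n hn, PartD.dold_nonneg n hn⟩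
  constructor
  · exact PartE.realize (PartE.c PartB.aa) PartB.aa (PartE.moebius_inversion PartB.aa hdold)
  · exact fun n hn => hdold n hn
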